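/- Let (f_j)_{j∈ℕ} be an orthonormal sequence in ℓ₂(ℕ,ℂ) with each f_j ∈ s, and let (N_k)_{k∈ℕ} be a family of finite nonempty pairwise disjoint subsets of ℕ. Then for every q ∈ ℕ₀ there exists r ∈ ℕ₀ such that ∑_{k=1}^∞ (max_{j∈N_k} |f_j|_q) / (max_{j∈N_k} |f_j|_r) < ∞. -/

import Mathlib

set_option maxHeartbeats 1600000


noncomputable section

/-- Membership in the space `s` of rapidly decreasing sequences (the paper's index
`j ∈ {1,2,...}` corresponds to `j+1` here). -/
def inS (ξ : ℕ → ℂ) : Prop :=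
  ∀ q : ℕ, Summable fun j : ℕ => ‖ξ j‖ ^ 2 * ((j : ℝ) + 1) ^ (2 * q)

/-- The `q`-th norm `|ξ|_q` on `s`. -/
def sNorm (q : ℕ) (ξ : ℕ → ℂ) : ℝ :=
  Real.sqrt (∑' j : ℕ, ‖ξ j‖ ^ 2 * ((j : ℝ) + 1) ^ (2 * q))

lemma sNorm_nonneg (q : ℕ) (ξ : ℕ → ℂ) : 0 ≤ sNorm q ξ := Real.sqrt_nonneg _

lemma sNorm_sq (q : ℕ) (ξ : ℕ → ℂ) :
    sNorm q ξ ^ 2 = ∑' j : ℕ, ‖ξ j‖ ^ 2 * ((j : ℝ) + 1) ^ (2 * q) :=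
  Real.sq_sqrt (tsum_nonneg fun j => by positivity)

lemma meml2_aux {ξ : ℕ → ℂ} (h : Summable fun m => ‖ξ m‖ ^ 2) :
    Memℓp ξ 2 := by
  apply memℓp_gen
  have h2 : ((2 : ENNReal)).toReal = ((2 : ℕ) : ℝ) := by norm_num
  rw [h2]
  simpa [Real.rpow_natCast] using h

/-- Bessel's inequality, coordinatewise, for an orthonormal sequence in `ℓ₂`. -/
lemma bessel_aux (g : ℕ → ℕ → ℂ) (hs : ∀ k, Summable fun m => ‖g k m‖ ^ 2)
    (hong : ∀ k l : ℕ,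
      (∑' m : ℕ, (starRingEnd ℂ) (g k m) * g l m) = if k = l then 1 else 0)
    (B : Finset ℕ) (m : ℕ) : ∑ k ∈ B, ‖g k m‖ ^ 2 ≤ 1 := by
  classical
  set G : ℕ → lp (fun _ : ℕ => ℂ) 2 := fun k => ⟨g k, meml2_aux (hs k)⟩ with hG
  have hGcoe : ∀ k m, (G k : ∀ _ : ℕ, ℂ) m = g k m := fun k m => rfl
  have hGon : Orthonormal ℂ G := by
    rw [orthonormal_iff_ite]
    intro k l
    have h1 : (inner ℂ (G k) (G l) : ℂ) = ∑' m : ℕ, (starRingEnd ℂ) (g k m) * g l m := by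
      rw [lp.inner_eq_tsum]
      simp only [RCLike.inner_apply]
      exact tsum_congr fun i => mul_comm _ _
    rw [h1, hong k l]
  have hb := hGon.sum_inner_products_le (𝕜 := ℂ) (lp.single (E := fun _ : ℕ => ℂ) 2 m (1 : ℂ)) (s := B)
  have hnorm : ‖lp.single (E := fun _ : ℕ => ℂ) 2 m (1:ℂ)‖ = 1 := by
    have h := lp.norm_single (p := 2) (E := fun _ : ℕ => ℂ) (by norm_num)
      m (1:ℂ)
    simpa using h
  have hinner : ∀ k, (inner ℂ (G k) (lp.single (E := fun _ : ℕ => ℂ) 2 m (1 : ℂ)) : ℂ) = (starRingEnd ℂ) (g k m) := by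
    intro k
    rw [lp.inner_single_right]
    simp [RCLike.inner_apply, hGcoe]
  calc ∑ k ∈ B, ‖g k m‖ ^ 2
      = ∑ k ∈ B, ‖(inner ℂ (G k) (lp.single (E := fun _ : ℕ => ℂ) 2 m (1 : ℂ)) : ℂ)‖ ^ 2 := by
        refine Finset.sum_congr rfl fun k _ => ?_
        rw [hinner k]
        simp
    _ ≤ ‖lp.single (E := fun _ : ℕ => ℂ) 2 m (1:ℂ)‖ ^ 2 := hb
    _ = 1 := by rw [hnorm]; norm_num

/-- Let `(f_j)` be an orthonormal sequence in `ℓ₂` with each `f_j ∈ s` and `(N_k)` finite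
nonempty pairwise disjoint subsets of `ℕ`. Then for every `q` there is `r` with
`∑_k (max_{j ∈ N_k} |f_j|_q) / (max_{j ∈ N_k} |f_j|_r) < ∞`. -/
theorem stmt_12 (f : ℕ → ℕ → ℂ) (hfs : ∀ j, inS (f j))
    (hon : ∀ i j : ℕ,
      (∑' m : ℕ, (starRingEnd ℂ) (f i m) * f j m) = if i = j then 1 else 0)
    (N : ℕ → Finset ℕ) (hne : ∀ k, (N k).Nonempty)
    (hdisj : ∀ k l, k ≠ l → Disjoint (N k) (N l)) :
    ∀ q : ℕ, ∃ r : ℕ,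
      Summable fun k : ℕ =>
        ((N k).sup' (hne k) fun j => sNorm q (f j)) /
          ((N k).sup' (hne k) fun j => sNorm r (f j)) := by
  classical
  intro q
  refine ⟨q + 3, ?_⟩
  set r : ℕ := q + 3 with hrdef
  -- choose maximizers at level q
  have hj : ∀ k, ∃ j ∈ N k,
      ((N k).sup' (hne k) fun j => sNorm q (f j)) = sNorm q (f j) :=
    fun k => Finset.exists_mem_eq_sup' (hne k) _
  choose jf hjmem hjeq using hj
  have hjinj : Function.Injective jf := by
    intro k l hkl
    by_contra hkl'
    exact (Finset.disjoint_left.mp (hdisj k l hkl')) (hjmem k) (hkl ▸ hjmem l)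
  set g : ℕ → ℕ → ℂ := fun k => f (jf k) with hgdef
  have hgs : ∀ k p, Summable fun m => ‖g k m‖ ^ 2 * ((m : ℝ) + 1) ^ (2 * p) :=
    fun k p => hfs (jf k) p
  have hgs0 : ∀ k, Summable fun m => ‖g k m‖ ^ 2 := by
    intro k
    simpa using hgs k 0
  have hong : ∀ k l : ℕ,
      (∑' m : ℕ, (starRingEnd ℂ) (g k m) * g l m) = if k = l then 1 else 0 := by
    intro k l
    rw [hon (jf k) (jf l)]
    simp [hjinj.eq_iff]
  -- each g k has ℓ₂ norm 1
  have hnorm1 : ∀ k, ∑' m, ‖g k m‖ ^ 2 = 1 := by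
    intro k
    have h1 : (∑' m : ℕ, (starRingEnd ℂ) (g k m) * g k m) = 1 := by
      rw [hong k k]; simp
    have h2 : (fun m => (starRingEnd ℂ) (g k m) * g k m)
        = fun m => ((‖g k m‖ ^ 2 : ℝ) : ℂ) := by
      funext m
      rw [RCLike.conj_mul]
      norm_cast
    rw [h2] at h1
    have h3 : HasSum (fun m => ((‖g k m‖ ^ 2 : ℝ) : ℂ))
        (((∑' m, ‖g k m‖ ^ 2 : ℝ)) : ℂ) :=
      (hgs0 k).hasSum.map Complex.ofRealHom.toAddMonoidHom Complex.continuous_ofReal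
    have h4 := h3.tsum_eq
    rw [h1] at h4
    exact_mod_cast h4.symm
  -- head and tail
  set T : ℕ → ℕ → ℝ := fun k M => ∑' m, ‖g k (m + M)‖ ^ 2 with hTdef
  set H : ℕ → ℕ → ℝ := fun k M => ∑ m ∈ Finset.range M, ‖g k m‖ ^ 2 with hHdef
  have hHT : ∀ k M, H k M + T k M = 1 := by
    intro k M
    rw [hHdef, hTdef]
    exact (Summable.sum_add_tsum_nat_add M (hgs0 k)).trans (hnorm1 k)
  have hTnonneg : ∀ k M, 0 ≤ T k M := fun k M => tsum_nonneg fun m => by positivity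
  have hHnonneg : ∀ k M, 0 ≤ H k M := fun k M => Finset.sum_nonneg fun m _ => by positivity
  have hTanti : ∀ k {M M'}, M ≤ M' → T k M' ≤ T k M := by
    intro k M M' hMM
    have h1 : H k M ≤ H k M' :=
      Finset.sum_le_sum_of_subset_of_nonneg (Finset.range_subset_range.2 hMM)
        (fun m _ _ => by positivity)
    have := hHT k M
    have := hHT k M'
    linarith
  have hex : ∀ k, ∃ M, T k M < 1 / 2 := by
    intro k
    have h1 : Filter.Tendsto (fun M => T k M) Filter.atTop (nhds 0) :=
      tendsto_sum_nat_add fun m => ‖g k m‖ ^ 2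
    exact (h1.eventually_lt_const (by norm_num : (0:ℝ) < 1/2)).exists
  have hex' : ∀ k, ∃ M : ℕ, 1 ≤ M ∧ T k M < 1 / 2 ∧ 1 / 2 ≤ T k (M - 1) := by
    intro k
    have hspec : T k (Nat.find (hex k)) < 1 / 2 := Nat.find_spec (hex k)
    have hpos : 1 ≤ Nat.find (hex k) := by
      by_contra h
      push_neg at h
      have h' : Nat.find (hex k) = 0 := by omega
      rw [h'] at hspec
      have hT0 : T k 0 = 1 := by
        simp only [hTdef]
        simpa using hnorm1 k
      rw [hT0] at hspec
      norm_num at hspec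
    have hpred : 1 / 2 ≤ T k (Nat.find (hex k) - 1) := by
      have h1 := Nat.find_min (hex k) (m := Nat.find (hex k) - 1)
        (Nat.sub_lt hpos one_pos)
      linarith [not_lt.mp h1]
    exact ⟨Nat.find (hex k), hpos, hspec, hpred⟩
  choose Mk hMk_pos hMk_spec hMk_pred using hex'
  have hmR1 : ∀ k, (1 : ℝ) ≤ (Mk k : ℝ) := fun k => by exact_mod_cast hMk_pos k
  -- lower bounds for sNorm r
  have hb1 : ∀ k, 1 ≤ sNorm r (g k) ^ 2 := by
    intro k
    rw [sNorm_sq]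
    calc (1:ℝ) = ∑' m, ‖g k m‖ ^ 2 := (hnorm1 k).symm
      _ ≤ ∑' m, ‖g k m‖ ^ 2 * ((m : ℝ) + 1) ^ (2 * r) := by
          refine Summable.tsum_le_tsum (fun m => ?_) (hgs0 k) (hgs k r)
          have h0 : (1:ℝ) ≤ (m:ℝ) + 1 := by
            have : (0:ℝ) ≤ (m:ℝ) := Nat.cast_nonneg m
            linarith
          nlinarith [one_le_pow₀ h0 (n := 2 * r), sq_nonneg ‖g k m‖]
  have hbpos : ∀ k, 1 ≤ sNorm r (g k) := by
    intro k
    nlinarith [hb1 k, sNorm_nonneg r (g k)]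
  have hb2 : ∀ k, (Mk k : ℝ) ^ (2 * r) ≤ 2 * sNorm r (g k) ^ 2 := by
    intro k
    set M₀ : ℕ := Mk k - 1 with hM₀
    have hM₀1 : (M₀ : ℝ) + 1 = (Mk k : ℝ) := by
      rw [hM₀]
      have := hMk_pos k
      push_cast [Nat.cast_sub this]
      ring
    have hsplit := Summable.sum_add_tsum_nat_add M₀ (hgs k r)
    have htail : (Mk k : ℝ) ^ (2 * r) * T k M₀
        ≤ ∑' m, ‖g k (m + M₀)‖ ^ 2 * (((m + M₀ : ℕ) : ℝ) + 1) ^ (2 * r) := by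
      rw [hTdef]
      have hmul : (Mk k : ℝ) ^ (2 * r) * (∑' m, ‖g k (m + M₀)‖ ^ 2)
          = ∑' m, ‖g k (m + M₀)‖ ^ 2 * (Mk k : ℝ) ^ (2 * r) := by
        rw [tsum_mul_right]; ring
      rw [hmul]
      refine Summable.tsum_le_tsum (fun m => ?_)
        (((summable_nat_add_iff M₀).2 (hgs0 k)).mul_right _)
        ((summable_nat_add_iff M₀).2 (hgs k r))
      have harg : (Mk k : ℝ) ≤ ((m + M₀ : ℕ) : ℝ) + 1 := by
        push_cast
        linarith [hM₀1, (by exact_mod_cast Nat.zero_le m : (0:ℝ) ≤ (m:ℝ))]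
      have := pow_le_pow_left₀ (by positivity) harg (2 * r)
      nlinarith [sq_nonneg ‖g k (m + M₀)‖, pow_nonneg (by positivity : (0:ℝ) ≤ (Mk k : ℝ)) (2*r)]
    have hhead : 0 ≤ ∑ m ∈ Finset.range M₀, ‖g k m‖ ^ 2 * ((m : ℝ) + 1) ^ (2 * r) :=
      Finset.sum_nonneg fun m _ => by positivity
    have hT2 := hMk_pred k
    rw [sNorm_sq, ← hsplit]
    nlinarith [pow_nonneg (by positivity : (0:ℝ) ≤ (Mk k : ℝ)) (2*r)]
  -- upper bound for sNorm q
  have hP3 : ∀ k, sNorm q (g k) ^ 2 * (Mk k : ℝ) ^ 6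
      ≤ (Mk k : ℝ) ^ (2 * r) + sNorm r (g k) ^ 2 := by
    intro k
    set M : ℕ := Mk k with hM
    have hmul : sNorm q (g k) ^ 2 * (M : ℝ) ^ 6
        = ∑' m, ‖g k m‖ ^ 2 * ((m : ℝ) + 1) ^ (2 * q) * (M : ℝ) ^ 6 := by
      rw [sNorm_sq, tsum_mul_right]
    have hsummul : Summable fun m => ‖g k m‖ ^ 2 * ((m : ℝ) + 1) ^ (2 * q) * (M : ℝ) ^ 6 :=
      (hgs k q).mul_right _
    have hsplit := Summable.sum_add_tsum_nat_add M hsummul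
    -- head bound
    have hhead : ∑ m ∈ Finset.range M, ‖g k m‖ ^ 2 * ((m : ℝ) + 1) ^ (2 * q) * (M : ℝ) ^ 6
        ≤ (M : ℝ) ^ (2 * r) := by
      have h1 : ∑ m ∈ Finset.range M, ‖g k m‖ ^ 2 * ((m : ℝ) + 1) ^ (2 * q) * (M : ℝ) ^ 6
          ≤ ∑ m ∈ Finset.range M, ‖g k m‖ ^ 2 * (M : ℝ) ^ (2 * r) := by
        refine Finset.sum_le_sum fun m hm => ?_
        have hm' : (m : ℝ) + 1 ≤ (M : ℝ) := by
          have := Finset.mem_range.mp hm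
          exact_mod_cast Nat.succ_le_of_lt this
        have h2 : ((m : ℝ) + 1) ^ (2 * q) ≤ (M : ℝ) ^ (2 * q) :=
          pow_le_pow_left₀ (by positivity) hm' _
        have h3 : (M : ℝ) ^ (2 * q) * (M : ℝ) ^ 6 = (M : ℝ) ^ (2 * r) := by
          rw [← pow_add, hrdef]; ring_nf
        calc ‖g k m‖ ^ 2 * ((m : ℝ) + 1) ^ (2 * q) * (M : ℝ) ^ 6
            ≤ ‖g k m‖ ^ 2 * (M : ℝ) ^ (2 * q) * (M : ℝ) ^ 6 :=
              mul_le_mul_of_nonneg_right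
                (mul_le_mul_of_nonneg_left h2 (sq_nonneg ‖g k m‖)) (by positivity)
          _ = ‖g k m‖ ^ 2 * (M : ℝ) ^ (2 * r) := by rw [mul_assoc, h3]
      have h4 : ∑ m ∈ Finset.range M, ‖g k m‖ ^ 2 * (M : ℝ) ^ (2 * r)
          = H k M * (M : ℝ) ^ (2 * r) := by
        rw [hHdef, ← Finset.sum_mul]
      have h5 : H k M ≤ 1 := by
        have := hHT k M
        linarith [hTnonneg k M]
      calc ∑ m ∈ Finset.range M, ‖g k m‖ ^ 2 * ((m : ℝ) + 1) ^ (2 * q) * (M : ℝ) ^ 6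
          ≤ H k M * (M : ℝ) ^ (2 * r) := by rw [← h4]; exact h1
        _ ≤ (M : ℝ) ^ (2 * r) := by
            nlinarith [pow_nonneg (by positivity : (0:ℝ) ≤ (M:ℝ)) (2*r), hHnonneg k M]
    -- tail bound
    have htail : ∑' m, ‖g k (m + M)‖ ^ 2 * (((m + M : ℕ) : ℝ) + 1) ^ (2 * q) * (M : ℝ) ^ 6
        ≤ sNorm r (g k) ^ 2 := by
      have h1 : ∑' m, ‖g k (m + M)‖ ^ 2 * (((m + M : ℕ) : ℝ) + 1) ^ (2 * q) * (M : ℝ) ^ 6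
          ≤ ∑' m, ‖g k (m + M)‖ ^ 2 * (((m + M : ℕ) : ℝ) + 1) ^ (2 * r) := by
        refine Summable.tsum_le_tsum (fun m => ?_)
          ((summable_nat_add_iff M).2 hsummul)
          ((summable_nat_add_iff M).2 (hgs k r))
        have hM6 : (M : ℝ) ^ 6 ≤ (((m + M : ℕ) : ℝ) + 1) ^ 6 := by
          refine pow_le_pow_left₀ (by positivity) ?_ _
          push_cast
          linarith [(by exact_mod_cast Nat.zero_le m : (0:ℝ) ≤ (m:ℝ))]
        have hsplitpow : (((m + M : ℕ) : ℝ) + 1) ^ (2 * q) * (((m + M : ℕ) : ℝ) + 1) ^ 6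
            = (((m + M : ℕ) : ℝ) + 1) ^ (2 * r) := by
          rw [← pow_add, hrdef]; ring_nf
        calc ‖g k (m + M)‖ ^ 2 * (((m + M : ℕ) : ℝ) + 1) ^ (2 * q) * (M : ℝ) ^ 6
            ≤ ‖g k (m + M)‖ ^ 2 * (((m + M : ℕ) : ℝ) + 1) ^ (2 * q)
                * (((m + M : ℕ) : ℝ) + 1) ^ 6 :=
              mul_le_mul_of_nonneg_left hM6 (by positivity)
          _ = ‖g k (m + M)‖ ^ 2 * (((m + M : ℕ) : ℝ) + 1) ^ (2 * r) := by
              rw [mul_assoc, hsplitpow]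
      have h2 : ∑' m, ‖g k (m + M)‖ ^ 2 * (((m + M : ℕ) : ℝ) + 1) ^ (2 * r)
          ≤ sNorm r (g k) ^ 2 := by
        rw [sNorm_sq, ← Summable.sum_add_tsum_nat_add M (hgs k r)]
        have : 0 ≤ ∑ m ∈ Finset.range M, ‖g k m‖ ^ 2 * ((m : ℝ) + 1) ^ (2 * r) :=
          Finset.sum_nonneg fun m _ => by positivity
        linarith
      linarith
    rw [hmul, ← hsplit]
    linarith
  -- the key per-index estimate
  have hkey : ∀ k, sNorm q (g k) / sNorm r (g k) ≤ 2 / (Mk k : ℝ) ^ 3 := by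
    intro k
    have hb0 : (0:ℝ) < sNorm r (g k) := lt_of_lt_of_le one_pos (hbpos k)
    have hm0 : (0:ℝ) < (Mk k : ℝ) ^ 3 := pow_pos (lt_of_lt_of_le zero_lt_one (hmR1 k)) 3
    rw [div_le_div_iff₀ hb0 hm0]
    have h1 : (sNorm q (g k) * (Mk k : ℝ) ^ 3) ^ 2 ≤ (2 * sNorm r (g k)) ^ 2 := by
      have e1 : (sNorm q (g k) * (Mk k : ℝ) ^ 3) ^ 2
          = sNorm q (g k) ^ 2 * (Mk k : ℝ) ^ 6 := by ring
      rw [e1]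
      nlinarith [hP3 k, hb2 k]
    nlinarith [h1, mul_nonneg (mul_nonneg (sNorm_nonneg q (g k))
      (by positivity : (0:ℝ) ≤ (Mk k : ℝ) ^ 3)) (le_of_lt hb0),
      sNorm_nonneg q (g k), hb0.le]
  -- bound the ratio of sups
  set R : ℕ → ℝ := fun k =>
    ((N k).sup' (hne k) fun j => sNorm q (f j)) /
      ((N k).sup' (hne k) fun j => sNorm r (f j)) with hRdef
  have hDge : ∀ k, sNorm r (g k) ≤ (N k).sup' (hne k) fun j => sNorm r (f j) :=
    fun k => Finset.le_sup' (fun j => sNorm r (f j)) (hjmem k)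
  have hDpos : ∀ k, (0:ℝ) < (N k).sup' (hne k) fun j => sNorm r (f j) :=
    fun k => lt_of_lt_of_le (lt_of_lt_of_le one_pos (hbpos k)) (hDge k)
  have hRle : ∀ k, R k ≤ 2 / (Mk k : ℝ) ^ 3 := by
    intro k
    have hb0 : (0:ℝ) < sNorm r (g k) := lt_of_lt_of_le one_pos (hbpos k)
    have h1 : R k ≤ sNorm q (g k) / sNorm r (g k) := by
      rw [hRdef]
      simp only
      rw [hjeq k]
      exact div_le_div_of_nonneg_left (sNorm_nonneg q (g k)) hb0 (hDge k)
    exact h1.trans (hkey k)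
  have hRnonneg : ∀ k, 0 ≤ R k := by
    intro k
    rw [hRdef]
    refine div_nonneg ?_ (hDpos k).le
    rw [hjeq k]
    exact sNorm_nonneg q (g k)
  -- counting
  have hcount : ∀ (F : Finset ℕ) (M : ℕ),
      (((F.filter fun k => Mk k = M).card : ℝ)) ≤ 2 * M := by
    intro F M
    set S : Finset ℕ := F.filter fun k => Mk k = M with hSdef
    have hhalf : ∀ k ∈ S, (1:ℝ) / 2 ≤ H k M := by
      intro k hk
      have hkM : Mk k = M := (Finset.mem_filter.mp hk).2
      have := hMk_spec k
      rw [hkM] at this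
      have := hHT k M
      linarith
    have h1 : (S.card : ℝ) * (1 / 2) ≤ ∑ k ∈ S, H k M := by
      have := Finset.card_nsmul_le_sum S (fun k => H k M) (1/2 : ℝ) hhalf
      simpa [nsmul_eq_mul] using this
    have h2 : ∑ k ∈ S, H k M = ∑ m ∈ Finset.range M, ∑ k ∈ S, ‖g k m‖ ^ 2 := by
      rw [hHdef]
      exact Finset.sum_comm
    have h3 : ∑ m ∈ Finset.range M, ∑ k ∈ S, ‖g k m‖ ^ 2 ≤ M := by
      calc ∑ m ∈ Finset.range M, ∑ k ∈ S, ‖g k m‖ ^ 2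
          ≤ ∑ _m ∈ Finset.range M, (1:ℝ) :=
            Finset.sum_le_sum fun m _ => bessel_aux g hgs0 hong S m
        _ = M := by simp
    have := h1.trans (h2 ▸ h3)
    linarith
  -- final summability
  have hsummable2 : Summable fun n : ℕ => 1 / (n : ℝ) ^ 2 :=
    Real.summable_one_div_nat_pow.mpr one_lt_two
  apply summable_of_sum_le (fun k => hRnonneg k) (c := 4 * ∑' n : ℕ, 1 / (n : ℝ) ^ 2)
  intro F
  have step1 : ∑ k ∈ F, R k ≤ ∑ k ∈ F, 2 / (Mk k : ℝ) ^ 3 :=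
    Finset.sum_le_sum fun k _ => hRle k
  have step2 : ∑ k ∈ F, 2 / (Mk k : ℝ) ^ 3
      = ∑ M ∈ F.image Mk, ∑ k ∈ F.filter fun k => Mk k = M, 2 / (Mk k : ℝ) ^ 3 :=
    (Finset.sum_fiberwise_of_maps_to (fun k hk => Finset.mem_image_of_mem Mk hk) _).symm
  have step3 : ∀ M ∈ F.image Mk,
      ∑ k ∈ F.filter (fun k => Mk k = M), 2 / (Mk k : ℝ) ^ 3 ≤ 4 * (1 / (M : ℝ) ^ 2) := by
    intro M _
    have h1 : ∑ k ∈ F.filter (fun k => Mk k = M), 2 / (Mk k : ℝ) ^ 3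
        = ((F.filter fun k => Mk k = M).card : ℝ) * (2 / (M : ℝ) ^ 3) := by
      rw [Finset.sum_congr rfl (fun k hk => by
        rw [(Finset.mem_filter.mp hk).2]), Finset.sum_const, nsmul_eq_mul]
    rw [h1]
    rcases Nat.eq_zero_or_pos M with hM | hM
    · subst hM
      simp
    · have hM1 : (1:ℝ) ≤ (M : ℝ) := by exact_mod_cast hM
      have h2 : ((F.filter fun k => Mk k = M).card : ℝ) ≤ 2 * M := hcount F M
      have h3 : (0:ℝ) < (M:ℝ)^3 := by positivity
      have h4 : (0:ℝ) ≤ 2 / (M:ℝ)^3 := by positivity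
      calc ((F.filter fun k => Mk k = M).card : ℝ) * (2 / (M : ℝ) ^ 3)
          ≤ (2 * M) * (2 / (M : ℝ) ^ 3) := mul_le_mul_of_nonneg_right h2 h4
        _ = 4 * (1 / (M : ℝ) ^ 2) := by
            have hM0 : (M:ℝ) ≠ 0 := by intro h; rw [h] at hM1; norm_num at hM1
            field_simp
            ring
  have step4 : ∑ M ∈ F.image Mk, (4 : ℝ) * (1 / (M : ℝ) ^ 2)
      ≤ 4 * ∑' n : ℕ, 1 / (n : ℝ) ^ 2 := by
    rw [← Finset.mul_sum]
    refine mul_le_mul_of_nonneg_left ?_ (by norm_num)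
    exact Summable.sum_le_tsum _ (fun n _ => by positivity) hsummable2
  calc ∑ k ∈ F, R k ≤ ∑ k ∈ F, 2 / (Mk k : ℝ) ^ 3 := step1
    _ = ∑ M ∈ F.image Mk, ∑ k ∈ F.filter fun k => Mk k = M, 2 / (Mk k : ℝ) ^ 3 := step2
    _ ≤ ∑ M ∈ F.image Mk, (4 : ℝ) * (1 / (M : ℝ) ^ 2) := Finset.sum_le_sum step3
    _ ≤ 4 * ∑' n : ℕ, 1 / (n : ℝ) ^ 2 := step4

end
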